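/- Let X be a set with |X| ≥ 3 and let x₁, x₂, x₃ ∈ X be pairwise distinct. In the symmetric inverse monoid on X, the partial maps α (with domain {x₁}, sending x₁ to x₂) and β (with domain {x₁}, sending x₁ to x₃) satisfy: α ≠ β, αβ = βα, α² = βα, and β² = αβ (all four products being the empty map). Hence α — β is a left path of length 1 in the commuting graph of the symmetric inverse monoid, so the knit degree of the symmetric inverse monoid on X equals 1. -/

import Mathlib

/-- The symmetric inverse monoid: partial injective maps under composition
(`f * g = f.trans g`, i.e. apply `f` first, then `g`). -/
instance pequivSemigroup {X : Type*} : Semigroup (X ≃. X) where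
  mul f g := f.trans g
  mul_assoc := PEquiv.trans_assoc

/-- A left path of length `n` in the commuting graph of `S`: a path
`x 0 — x 1 — ⋯ — x n` of pairwise distinct non-central elements whose consecutive
vertices commute, with `x 0 ≠ x n` and `x 0 * x i = x n * x i` for all `i`. -/
def IsLeftPath {S : Type*} [Mul S] (n : ℕ) (x : Fin (n + 1) → S) : Prop :=
  (∀ i, x i ∉ Set.center S) ∧
  (∀ i j, i ≠ j → x i ≠ x j) ∧
  (∀ i : Fin n, x i.castSucc * x i.succ = x i.succ * x i.castSucc) ∧
  x 0 ≠ x (Fin.last n) ∧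
  ∀ i, x 0 * x i = x (Fin.last n) * x i

/-- The knit degree of `S`: the length of a shortest left path in its commuting graph. -/
noncomputable def knitDegree (S : Type*) [Mul S] : ℕ :=
  sInf {n | ∃ x : Fin (n + 1) → S, IsLeftPath n x}

theorem knitDegree_symmetric_inverse_monoid_eq_one {X : Type*} [DecidableEq X]
    (x₁ x₂ x₃ : X) (h12 : x₁ ≠ x₂) (h13 : x₁ ≠ x₃) (h23 : x₂ ≠ x₃) :
    PEquiv.single x₁ x₂ ≠ PEquiv.single x₁ x₃ ∧
    PEquiv.single x₁ x₂ * PEquiv.single x₁ x₃ = (⊥ : X ≃. X) ∧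
    PEquiv.single x₁ x₃ * PEquiv.single x₁ x₂ = (⊥ : X ≃. X) ∧
    PEquiv.single x₁ x₂ * PEquiv.single x₁ x₂ = (⊥ : X ≃. X) ∧
    PEquiv.single x₁ x₃ * PEquiv.single x₁ x₃ = (⊥ : X ≃. X) ∧
    -- hence α*β = β*α, α² = β*α and β² = α*β, so α — β is a left path of length 1
    IsLeftPath 1 ![PEquiv.single x₁ x₂, PEquiv.single x₁ x₃] ∧
    knitDegree (X ≃. X) = 1 := by
  open PEquiv in
  have hne : PEquiv.single x₁ x₂ ≠ PEquiv.single x₁ x₃ := by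
    intro h
    have := congrArg (fun f : X ≃. X => f x₁) h
    simp [single_apply] at this
    exact h23 this
  have key : ∀ a b : X, a ≠ x₁ →
      (single x₁ a : X ≃. X) * single x₁ b = (⊥ : X ≃. X) := fun a b ha =>
    single_trans_single_of_ne ha _ _
  have hab := key x₂ x₃ h12.symm
  have hba := key x₃ x₂ h13.symm
  have haa := key x₂ x₂ h12.symm
  have hbb := key x₃ x₃ h13.symm
  -- noncentrality
  have noncen : ∀ a : X, x₁ ≠ a → (single x₁ a : X ≃. X) ∉ Set.center (X ≃. X) := by
    intro a ha hmem
    rw [Semigroup.mem_center_iff] at hmem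
    have h := hmem (single a x₁)
    have h1 : (single a x₁ : X ≃. X) * single x₁ a = single a a :=
      single_trans_single a x₁ a
    have h2 : (single x₁ a : X ≃. X) * single a x₁ = single x₁ x₁ :=
      single_trans_single x₁ a x₁
    rw [h1, h2] at h
    have := congrArg (fun f : X ≃. X => f a) h
    simp only [single_apply, single_apply_of_ne ha] at this; exact Option.some_ne_none _ this
  have path : IsLeftPath 1 ![PEquiv.single x₁ x₂, PEquiv.single x₁ x₃] := by
    refine ⟨?_, ?_, ?_, ?_, ?_⟩
    · intro i
      fin_cases i
      · simpa using noncen x₂ h12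
      · simpa using noncen x₃ h13
    · intro i j hij
      fin_cases i <;> fin_cases j <;> simp_all (config := {decide := true}) <;> first | exact hne | exact Ne.symm hne
    · intro i
      fin_cases i
      simp only [Fin.castSucc, Fin.succ, Matrix.cons_val_zero, Matrix.cons_val_one]
      show (single x₁ x₂ : X ≃. X) * single x₁ x₃ = single x₁ x₃ * single x₁ x₂
      rw [hab, hba]
    · simpa using hne
    · intro i
      fin_cases i
      · show (single x₁ x₂ : X ≃. X) * single x₁ x₂ = single x₁ x₃ * single x₁ x₂
        rw [haa, hba]
      · show (single x₁ x₂ : X ≃. X) * single x₁ x₃ = single x₁ x₃ * single x₁ x₃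
        rw [hab, hbb]
  have hdeg : knitDegree (X ≃. X) = 1 := by
    refine le_antisymm (Nat.sInf_le ⟨_, path⟩) ?_
    refine le_csInf ⟨1, _, path⟩ ?_
    rintro n ⟨x, hx⟩
    rcases Nat.eq_zero_or_pos n with rfl | h
    · exact absurd rfl hx.2.2.2.1
    · exact h
  exact ⟨hne, hab, hba, haa, hbb, path, hdeg⟩
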